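/- Let G be a group and ω a 𝕋-valued 2-cocycle on G. Define v : G → 𝕋 by v(g) = ω(g⁻¹,g)·ω(e,e). Then for all g,h ∈ G one has ω(h⁻¹,g⁻¹) = \overline{ω(g,h)}·v(g)·v(h)·\overline{v(gh)}; that is, the cocycles ω̃(g,h) = ω(h⁻¹,g⁻¹) and ω̄(g,h) = \overline{ω(g,h)} are cohomologous via the function v. -/

import Mathlib

/-- Let `G` be a group and `ω` a `𝕋`-valued 2-cocycle on `G`. Define `v(g) = ω(g⁻¹,g)·ω(e,e)`.
Then `ω(h⁻¹,g⁻¹) = conj(ω(g,h))·v(g)·v(h)·conj(v(gh))` for all `g,h ∈ G`; that is, the cocycles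
`ω̃(g,h) = ω(h⁻¹,g⁻¹)` and `ω̄(g,h) = conj(ω(g,h))` are cohomologous via `v`. -/
theorem stmt_2 {G : Type*} [Group G] (ω : G → G → ℂ)
    (habs : ∀ g h : G, ‖ω g h‖ = 1)
    (hcoc : ∀ g h k : G, ω g h * ω (g * h) k = ω g (h * k) * ω h k)
    (v : G → ℂ) (hv : ∀ g : G, v g = ω g⁻¹ g * ω 1 1) :
    ∀ g h : G, ω h⁻¹ g⁻¹ =
      starRingEnd ℂ (ω g h) * v g * v h * starRingEnd ℂ (v (g * h)) := by
  have hne : ∀ g h : G, ω g h ≠ 0 := by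
    intro g h h0
    simpa [h0] using habs g h
  have hconj : ∀ g h : G, starRingEnd ℂ (ω g h) = (ω g h)⁻¹ := by
    intro g h
    have hmul : starRingEnd ℂ (ω g h) * ω g h = 1 := by
      rw [mul_comm, Complex.mul_conj, ← Complex.sq_norm, habs]
      norm_num
    exact eq_inv_of_mul_eq_one_left hmul
  have hone : ∀ g : G, ω g 1 = ω 1 1 := by
    intro g
    have h := hcoc g 1 1
    rw [mul_one, one_mul] at h
    exact mul_left_cancel₀ (hne g 1) h
  intro g h
  have h1 := hcoc h⁻¹ g⁻¹ g
  rw [inv_mul_cancel, hone, ← mul_inv_rev] at h1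
  have h2 := hcoc (g * h)⁻¹ g h
  rw [show (g * h)⁻¹ * g = h⁻¹ by group] at h2
  rw [hv, hv, hv, hconj, map_mul, hconj, hconj]
  set W := ω 1 1 with hW'
  set A := ω h⁻¹ g⁻¹
  set B := ω (g * h)⁻¹ g
  set C := ω g⁻¹ g
  set D := ω h⁻¹ h
  set E := ω (g * h)⁻¹ (g * h)
  set F := ω g h
  have hW : W ≠ 0 := hne 1 1
  have hF : F ≠ 0 := hne g h
  have hE : E ≠ 0 := hne (g * h)⁻¹ (g * h)
  field_simp
  linear_combination D * h1 - A * h2
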